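/- Between any two consecutive poles of g(k) = Σ_{i=1}^{N} cot(kL_i) there is exactly one root of g: if p < q are such that sin(kL_i) ≠ 0 for all i and all k ∈ (p,q), while sin(pL_j) = 0 and sin(qL_m) = 0 for some j, m, then there exists a unique k ∈ (p,q) with g(k) = 0. -/

import Mathlib

open Real Set Filter Topology

private lemma cot_tendsto_zero_right :
    Tendsto (fun t : ℝ => Real.cos t / Real.sin t) (𝓝[>] (0:ℝ)) atTop := by
  simp only [div_eq_mul_inv]
  apply Filter.Tendsto.pos_mul_atTop (by norm_num : (0:ℝ) < 1)
  · have := (Real.continuous_cos.tendsto 0).mono_left (nhdsWithin_le_nhds (s := Ioi (0:ℝ)))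
    simpa using this
  · apply tendsto_inv_nhdsGT_zero.comp
    rw [tendsto_nhdsWithin_iff]
    constructor
    · simpa using (Real.continuous_sin.tendsto 0).mono_left (nhdsWithin_le_nhds (s := Ioi (0:ℝ)))
    · filter_upwards [Ioo_mem_nhdsGT_of_mem (⟨le_refl 0, Real.pi_pos⟩ : (0:ℝ) ∈ Ico 0 π)] with t ht
      exact Real.sin_pos_of_pos_of_lt_pi ht.1 ht.2

private lemma cot_tendsto_zero_left :
    Tendsto (fun t : ℝ => Real.cos t / Real.sin t) (𝓝[<] (0:ℝ)) atBot := by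
  have hneg : Tendsto (fun t : ℝ => -t) (𝓝[<] (0:ℝ)) (𝓝[>] (0:ℝ)) := by
    rw [tendsto_nhdsWithin_iff]
    constructor
    · simpa using ((continuous_neg : Continuous (fun t : ℝ => -t)).tendsto 0).mono_left
        (nhdsWithin_le_nhds (s := Iio (0:ℝ)))
    · filter_upwards [self_mem_nhdsWithin] with t ht
      simpa using ht
  have h := cot_tendsto_zero_right.comp hneg
  have h2 : Tendsto (fun t : ℝ => -(Real.cos t / Real.sin t)) (𝓝[<] (0:ℝ)) atTop := by
    refine h.congr fun t => ?_
    simp [Function.comp, Real.cos_neg, Real.sin_neg, div_neg]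
  exact tendsto_neg_atTop_iff.mp h2

/-- Shift identity: if `sin (p*L) = 0` then `cot (k*L) = cot ((k-p)*L)`. -/
private lemma cot_shift {p L : ℝ} (hp : Real.sin (p * L) = 0) (k : ℝ) :
    Real.cos (k * L) / Real.sin (k * L)
      = Real.cos ((k - p) * L) / Real.sin ((k - p) * L) := by
  have hc : Real.cos (p * L) ≠ 0 := by
    intro h
    have := Real.sin_sq_add_cos_sq (p * L)
    rw [hp, h] at this; norm_num at this
  have h1 : Real.cos (k * L) = Real.cos (p * L) * Real.cos ((k - p) * L) := by
    have : k * L = p * L + (k - p) * L := by ring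
    rw [this, Real.cos_add, hp]; ring
  have h2 : Real.sin (k * L) = Real.cos (p * L) * Real.sin ((k - p) * L) := by
    have : k * L = p * L + (k - p) * L := by ring
    rw [this, Real.sin_add, hp]; ring
  rw [h1, h2, mul_div_mul_left _ _ hc]

/-- If `sin (p*L) = 0` and `L > 0`, `cot (k*L) → +∞` as `k → p⁺`. -/
private lemma cot_tendsto_pole_right {p L : ℝ} (hL : 0 < L) (hp : Real.sin (p * L) = 0) :
    Tendsto (fun k : ℝ => Real.cos (k * L) / Real.sin (k * L)) (𝓝[>] p) atTop := by
  have hmap : Tendsto (fun k : ℝ => (k - p) * L) (𝓝[>] p) (𝓝[>] (0:ℝ)) := by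
    rw [tendsto_nhdsWithin_iff]
    constructor
    · have : Tendsto (fun k : ℝ => (k - p) * L) (𝓝 p) (𝓝 ((p - p) * L)) :=
        ((continuous_id.sub continuous_const).mul continuous_const).tendsto p
      simpa using this.mono_left (nhdsWithin_le_nhds (s := Ioi p))
    · filter_upwards [self_mem_nhdsWithin] with k hk
      exact mul_pos (sub_pos.mpr hk) hL
  have h := cot_tendsto_zero_right.comp hmap
  refine h.congr fun k => ?_
  simp only [Function.comp]
  exact (cot_shift hp k).symm

private lemma cot_tendsto_pole_left {q L : ℝ} (hL : 0 < L) (hq : Real.sin (q * L) = 0) :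
    Tendsto (fun k : ℝ => Real.cos (k * L) / Real.sin (k * L)) (𝓝[<] q) atBot := by
  have hmap : Tendsto (fun k : ℝ => (k - q) * L) (𝓝[<] q) (𝓝[<] (0:ℝ)) := by
    rw [tendsto_nhdsWithin_iff]
    constructor
    · have : Tendsto (fun k : ℝ => (k - q) * L) (𝓝 q) (𝓝 ((q - q) * L)) :=
        ((continuous_id.sub continuous_const).mul continuous_const).tendsto q
      simpa using this.mono_left (nhdsWithin_le_nhds (s := Iio q))
    · filter_upwards [self_mem_nhdsWithin] with k hk
      exact mul_neg_of_neg_of_pos (sub_neg.mpr hk) hL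
  have h := cot_tendsto_zero_left.comp hmap
  refine h.congr fun k => ?_
  simp only [Function.comp]
  exact (cot_shift hq k).symm

/-- Between two consecutive poles of `g k = ∑ i, cot (k L i)` there is exactly one
root of `g`. -/
theorem cot_sum_unique_root_between_poles (N : ℕ) (hN : 1 ≤ N) (L : Fin N → ℝ)
    (hL : ∀ i, 0 < L i) (p q : ℝ) (hp : 0 < p) (hpq : p < q)
    (hreg : ∀ k ∈ Ioo p q, ∀ i, sin (k * L i) ≠ 0)
    (hpolep : ∃ j, sin (p * L j) = 0) (hpoleq : ∃ m, sin (q * L m) = 0) :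
    ∃! k, k ∈ Ioo p q ∧ (∑ i, cos (k * L i) / sin (k * L i)) = 0 := by
  haveI : Nonempty (Fin N) := ⟨⟨0, hN⟩⟩
  set g : ℝ → ℝ := fun k => ∑ i, cos (k * L i) / sin (k * L i) with hg
  -- derivative of g on Ioo p q
  have hderiv : ∀ k ∈ Ioo p q,
      HasDerivAt g (∑ i, -(L i) / (sin (k * L i))^2) k := by
    intro k hk
    apply HasDerivAt.fun_sum
    intro i _
    have hs := hreg k hk i
    have hc : HasDerivAt (fun x : ℝ => cos (x * L i)) (-sin (k * L i) * L i) k := by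
      have := (Real.hasDerivAt_cos (k * L i)).comp k
        ((hasDerivAt_id k).mul_const (L i))
      simpa [mul_comm, Function.comp_def] using this
    have hs' : HasDerivAt (fun x : ℝ => sin (x * L i)) (cos (k * L i) * L i) k := by
      have := (Real.hasDerivAt_sin (k * L i)).comp k
        ((hasDerivAt_id k).mul_const (L i))
      simpa [mul_comm, Function.comp_def] using this
    have hd := hc.fun_div hs' hs
    have h1 := Real.sin_sq_add_cos_sq (k * L i)
    convert hd using 2
    · rfl
    · linear_combination (L i) * h1
  -- g is strictly antitone on Ioo p q
  have hcont : ContinuousOn g (Ioo p q) := fun k hk =>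
    ((hderiv k hk).continuousAt).continuousWithinAt
  have hanti : StrictAntiOn g (Ioo p q) := by
    apply strictAntiOn_of_deriv_neg (convex_Ioo p q) hcont
    intro k hk
    rw [interior_Ioo] at hk
    rw [(hderiv k hk).deriv]
    apply Finset.sum_neg
    · intro i _
      have hs := hreg k hk i
      have hpos : (0:ℝ) < (sin (k * L i))^2 := by positivity
      exact div_neg_of_neg_of_pos (neg_neg_iff_pos.mpr (hL i)) hpos
    · exact Finset.univ_nonempty
  obtain ⟨j, hj⟩ := hpolep
  obtain ⟨m, hm⟩ := hpoleq
  -- g tends to +∞ at p⁺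
  have htop : Tendsto g (𝓝[>] p) atTop := by
    set blo : Fin N → ℝ := fun i =>
      if sin (p * L i) = 0 then 0 else cos (p * L i) / sin (p * L i) - 1 with hblo
    have hbnd : ∀ i : Fin N, ∀ᶠ k in 𝓝[>] p, blo i ≤ cos (k * L i) / sin (k * L i) := by
      intro i
      by_cases hi : sin (p * L i) = 0
      · have := cot_tendsto_pole_right (hL i) hi
        filter_upwards [this.eventually_ge_atTop 0] with k hk
        simpa [hblo, hi] using hk
      · have hc1 : ContinuousAt (fun k : ℝ => cos (k * L i)) p := by fun_prop
        have hc2 : ContinuousAt (fun k : ℝ => sin (k * L i)) p := by fun_prop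
        have hco : Tendsto (fun k : ℝ => cos (k * L i) / sin (k * L i)) (𝓝[>] p)
            (𝓝 (cos (p * L i) / sin (p * L i))) := (hc1.div hc2 hi).continuousWithinAt
        have hlt : blo i < cos (p * L i) / sin (p * L i) := by
          simp only [hblo, if_neg hi]; linarith
        filter_upwards [hco.eventually (eventually_ge_nhds hlt)] with k hk using hk
    have hall : ∀ᶠ k in 𝓝[>] p, ∀ i ∈ Finset.univ.erase j,
        blo i ≤ cos (k * L i) / sin (k * L i) :=
      (eventually_all_finset _).mpr fun i _ => hbnd i
    have hmain : Tendsto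
        (fun k : ℝ => cos (k * L j) / sin (k * L j) + ∑ i ∈ Finset.univ.erase j, blo i)
        (𝓝[>] p) atTop :=
      tendsto_atTop_add_const_right _ _ (cot_tendsto_pole_right (hL j) hj)
    apply tendsto_atTop_mono' _ _ hmain
    filter_upwards [hall] with k hk
    rw [hg]
    simp only
    rw [← Finset.add_sum_erase _ _ (Finset.mem_univ j)]
    exact add_le_add le_rfl (Finset.sum_le_sum hk)
  -- g tends to -∞ at q⁻
  have hbot : Tendsto g (𝓝[<] q) atBot := by
    set bhi : Fin N → ℝ := fun i =>
      if sin (q * L i) = 0 then 0 else cos (q * L i) / sin (q * L i) + 1 with hbhi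
    have hbnd : ∀ i : Fin N, ∀ᶠ k in 𝓝[<] q, cos (k * L i) / sin (k * L i) ≤ bhi i := by
      intro i
      by_cases hi : sin (q * L i) = 0
      · have := cot_tendsto_pole_left (hL i) hi
        filter_upwards [this.eventually_le_atBot 0] with k hk
        simpa [hbhi, hi] using hk
      · have hc1 : ContinuousAt (fun k : ℝ => cos (k * L i)) q := by fun_prop
        have hc2 : ContinuousAt (fun k : ℝ => sin (k * L i)) q := by fun_prop
        have hco : Tendsto (fun k : ℝ => cos (k * L i) / sin (k * L i)) (𝓝[<] q)
            (𝓝 (cos (q * L i) / sin (q * L i))) := (hc1.div hc2 hi).continuousWithinAt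
        have hlt : cos (q * L i) / sin (q * L i) < bhi i := by
          simp only [hbhi, if_neg hi]; linarith
        filter_upwards [hco.eventually (eventually_le_nhds hlt)] with k hk using hk
    have hall : ∀ᶠ k in 𝓝[<] q, ∀ i ∈ Finset.univ.erase m,
        cos (k * L i) / sin (k * L i) ≤ bhi i :=
      (eventually_all_finset _).mpr fun i _ => hbnd i
    have hmain : Tendsto
        (fun k : ℝ => cos (k * L m) / sin (k * L m) + ∑ i ∈ Finset.univ.erase m, bhi i)
        (𝓝[<] q) atBot :=
      tendsto_atBot_add_const_right _ _ (cot_tendsto_pole_left (hL m) hm)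
    apply tendsto_atBot_mono' _ _ hmain
    filter_upwards [hall] with k hk
    rw [hg]
    simp only
    rw [← Finset.add_sum_erase _ _ (Finset.mem_univ m)]
    exact add_le_add le_rfl (Finset.sum_le_sum hk)
  -- pick points with positive / negative values
  set c : ℝ := (p + q) / 2 with hcdef
  have hc1 : p < c := by simp only [hcdef]; linarith
  have hc2 : c < q := by simp only [hcdef]; linarith
  have hevp : ∀ᶠ k in 𝓝[>] p, k ∈ Ioo p c := Ioo_mem_nhdsGT_of_mem ⟨le_refl p, hc1⟩
  have hevq : ∀ᶠ k in 𝓝[<] q, k ∈ Ioo c q := Ioo_mem_nhdsLT_of_mem ⟨hc2, le_refl q⟩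
  obtain ⟨a, hga, haI⟩ := ((htop.eventually_gt_atTop 0).and hevp).exists
  obtain ⟨b, hgb, hbI⟩ := ((hbot.eventually_lt_atBot 0).and hevq).exists
  have hab : a < b := lt_trans haI.2 hbI.1
  have hsub : Icc a b ⊆ Ioo p q := fun x hx =>
    ⟨lt_of_lt_of_le haI.1 hx.1, lt_of_le_of_lt hx.2 hbI.2⟩
  -- intermediate value theorem
  have hivt := intermediate_value_Icc' hab.le (hcont.mono hsub)
  have h0 : (0:ℝ) ∈ Icc (g b) (g a) := ⟨hgb.le, hga.le⟩
  obtain ⟨k0, hk0, hk0g⟩ := hivt h0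
  refine ⟨k0, ⟨hsub hk0, hk0g⟩, ?_⟩
  rintro y ⟨hy, hgy⟩
  exact hanti.injOn hy (hsub hk0) (by show (∑ i, cos (y * L i) / sin (y * L i)) = g k0; rw [hgy, hk0g])
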